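/- Let λ > 0, β > 0, integers r ≥ 1, L ≥ 1 and S > r, weights b(1),…,b(L) ≥ 0 with Σ_{i=1}^{L} b(i) = 1, and a constant c > 0. Define θ(k) := c for k ∈ {r+1,…,S}; θ(j,ℓ) := c·(λ/(λ+β))^{r+1−j} · Σ_{i=ℓ}^{L} b(i)·(β/(λ+β))^{i−ℓ} · binom(i−ℓ+r−j, r−j) for 1 ≤ j ≤ r and 1 ≤ ℓ ≤ L; and θ(0,ℓ) := c·(λ/(λ+β))^{r}·(λ/β) · Σ_{i=ℓ}^{L} ( Σ_{g=i}^{L} b(g) )·(β/(λ+β))^{i−ℓ} · binom(i−ℓ+r−1, r−1) for 1 ≤ ℓ ≤ L. Then these numbers satisfy the balance equations of the M/M/1 queueing-inventory system under (r,S)-policy with phase-type lead times: (1) λ·θ(S) = β·Σ_{j=0}^{r} θ(j,1); (2) θ(k) = θ(k+1) for r+1 ≤ k ≤ S−1; (3) (λ+β)·θ(r,ℓ) = λ·b(ℓ)·θ(r+1) + β·θ(r,ℓ+1) for 1 ≤ ℓ ≤ L−1; (4) (λ+β)·θ(r,L) = λ·b(L)·θ(r+1); (5) (λ+β)·θ(j,L)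 = λ·θ(j+1,L) for 1 ≤ j ≤ r−1; (6) (λ+β)·θ(j,ℓ) = λ·θ(j+1,ℓ) + β·θ(j,ℓ+1) for 1 ≤ j ≤ r−1 and 1 ≤ ℓ ≤ L−1; (7) β·θ(0,ℓ) = λ·θ(1,ℓ) + β·θ(0,ℓ+1) for 1 ≤ ℓ ≤ L−1; (8) β·θ(0,L) = λ·θ(1,L). -/

import Mathlib

private lemma sum_Icc_bot (f : ℕ → ℝ) (a b : ℕ) (h : a ≤ b) :
    ∑ i ∈ Finset.Icc a b, f i = f a + ∑ i ∈ Finset.Icc (a+1) b, f i := by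
  have : Finset.Icc a b = insert a (Finset.Icc (a+1) b) := by
    ext x; simp only [Finset.mem_Icc, Finset.mem_insert]; omega
  rw [this, Finset.sum_insert (by simp only [Finset.mem_Icc]; omega)]

private lemma sum_Icc_top (f : ℕ → ℝ) (a b : ℕ) (h : a ≤ b) (hb : 1 ≤ b) :
    ∑ i ∈ Finset.Icc a b, f i = (∑ i ∈ Finset.Icc a (b-1), f i) + f b := by
  have : Finset.Icc a b = insert b (Finset.Icc a (b-1)) := by
    ext x; simp only [Finset.mem_Icc, Finset.mem_insert]; omega
  rw [this, Finset.sum_insert (by simp only [Finset.mem_Icc]; omega)]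
  ring

private lemma sum_Icc_shift (f : ℕ → ℝ) (a b : ℕ) :
    ∑ i ∈ Finset.Icc (a+1) (b+1), f i = ∑ i ∈ Finset.Icc a b, f (i+1) := by
  rw [← Finset.map_add_right_Icc a b 1, Finset.sum_map]
  rfl

private lemma telescope_aux (f g : ℕ → ℝ) (L : ℕ) (hL : 1 ≤ L)
    (h1 : ∀ ℓ, 1 ≤ ℓ → ℓ < L → f ℓ = g ℓ + f (ℓ + 1))
    (h2 : f L = g L) :
    f 1 = ∑ ℓ ∈ Finset.Icc 1 L, g ℓ := by
  suffices h : ∀ n, n ≤ L - 1 → f (L - n) = ∑ ℓ ∈ Finset.Icc (L - n) L, g ℓ by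
    have h' := h (L - 1) le_rfl
    rwa [show L - (L - 1) = 1 by omega] at h'
  intro n hn
  induction n with
  | zero => simpa using h2
  | succ n ih =>
    have e1 : L - (n+1) + 1 = L - n := by omega
    have h1' := h1 (L - (n+1)) (by omega) (by omega)
    rw [h1', e1, ih (by omega), sum_Icc_bot g (L - (n+1)) L (by omega), e1]

/-- The explicit vector θ solves the balance equations of the
M/M/1 queueing-inventory system under (r,S)-policy with phase-type lead times. -/
theorem stmt_4 (lam beta : ℝ) (hlam : 0 < lam) (hbeta : 0 < beta)
    (r L S : ℕ) (hr : 1 ≤ r) (hL : 1 ≤ L) (hS : r < S)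
    (b : ℕ → ℝ) (hb_nonneg : ∀ i, 1 ≤ i → i ≤ L → 0 ≤ b i)
    (hb_sum : ∑ i ∈ Finset.Icc 1 L, b i = 1)
    (c : ℝ) (hc : 0 < c)
    (θI : ℕ → ℝ) (θjl : ℕ → ℕ → ℝ) (θ0 : ℕ → ℝ)
    (hθI : ∀ k, r + 1 ≤ k → k ≤ S → θI k = c)
    (hθjl : ∀ j ℓ, 1 ≤ j → j ≤ r → 1 ≤ ℓ → ℓ ≤ L →
      θjl j ℓ = c * (lam / (lam + beta)) ^ (r + 1 - j) *
        ∑ i ∈ Finset.Icc ℓ L, b i * (beta / (lam + beta)) ^ (i - ℓ) *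
          (Nat.choose (i - ℓ + r - j) (r - j) : ℝ))
    (hθ0 : ∀ ℓ, 1 ≤ ℓ → ℓ ≤ L →
      θ0 ℓ = c * (lam / (lam + beta)) ^ r * (lam / beta) *
        ∑ i ∈ Finset.Icc ℓ L, (∑ g ∈ Finset.Icc i L, b g) *
          (beta / (lam + beta)) ^ (i - ℓ) *
          (Nat.choose (i - ℓ + r - 1) (r - 1) : ℝ)) :
    -- (1)
    (lam * θI S = beta * (θ0 1 + ∑ j ∈ Finset.Icc 1 r, θjl j 1)) ∧
    -- (2)
    (∀ k, r + 1 ≤ k → k + 1 ≤ S → θI k = θI (k + 1)) ∧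
    -- (3)
    (∀ ℓ, 1 ≤ ℓ → ℓ < L →
      (lam + beta) * θjl r ℓ = lam * b ℓ * θI (r + 1) + beta * θjl r (ℓ + 1)) ∧
    -- (4)
    ((lam + beta) * θjl r L = lam * b L * θI (r + 1)) ∧
    -- (5)
    (∀ j, 1 ≤ j → j < r → (lam + beta) * θjl j L = lam * θjl (j + 1) L) ∧
    -- (6)
    (∀ j ℓ, 1 ≤ j → j < r → 1 ≤ ℓ → ℓ < L →
      (lam + beta) * θjl j ℓ = lam * θjl (j + 1) ℓ + beta * θjl j (ℓ + 1)) ∧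
    -- (7)
    (∀ ℓ, 1 ≤ ℓ → ℓ < L →
      beta * θ0 ℓ = lam * θjl 1 ℓ + beta * θ0 (ℓ + 1)) ∧
    -- (8)
    (beta * θ0 L = lam * θjl 1 L) := by
  have hlb : (0:ℝ) < lam + beta := by linarith
  have hlb' : lam + beta ≠ 0 := ne_of_gt hlb
  have hbne : beta ≠ 0 := ne_of_gt hbeta
  have hI1 : θI (r+1) = c := hθI (r+1) le_rfl (by omega)
  -- Part 2
  have part2 : ∀ k, r + 1 ≤ k → k + 1 ≤ S → θI k = θI (k + 1) := by
    intro k h1 h2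
    rw [hθI k h1 (by omega), hθI (k+1) (by omega) h2]
  -- Part 4
  have part4 : (lam + beta) * θjl r L = lam * b L * θI (r + 1) := by
    rw [hθjl r L hr le_rfl hL le_rfl, hI1]
    simp only [Finset.Icc_self, Finset.sum_singleton, Nat.sub_self, zero_add, pow_zero,
      Nat.add_sub_cancel, Nat.choose_zero_right, Nat.cast_one, mul_one, one_mul]
    rw [show r + 1 - r = 1 by omega, pow_one]
    field_simp
  -- Part 5
  have part5 : ∀ j, 1 ≤ j → j < r → (lam + beta) * θjl j L = lam * θjl (j + 1) L := by
    intro j hj1 hjr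
    rw [hθjl j L hj1 (by omega) hL le_rfl, hθjl (j+1) L (by omega) (by omega) hL le_rfl]
    simp only [Finset.Icc_self, Finset.sum_singleton, Nat.sub_self, zero_add, pow_zero,
      Nat.choose_self, Nat.cast_one, mul_one, one_mul]
    rw [show r + 1 - j = (r + 1 - (j+1)) + 1 by omega, pow_succ]
    field_simp
  -- Part 8
  have part8 : beta * θ0 L = lam * θjl 1 L := by
    rw [hθ0 L hL le_rfl, hθjl 1 L le_rfl hr hL le_rfl]
    simp only [Finset.Icc_self, Finset.sum_singleton, Nat.sub_self, zero_add, pow_zero,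
      Nat.choose_self, Nat.cast_one, mul_one, one_mul, Nat.add_sub_cancel]
    field_simp
  -- Part 3
  have part3 : ∀ ℓ, 1 ≤ ℓ → ℓ < L →
      (lam + beta) * θjl r ℓ = lam * b ℓ * θI (r + 1) + beta * θjl r (ℓ + 1) := by
    intro ℓ hℓ1 hℓL
    rw [hθjl r ℓ hr le_rfl hℓ1 (by omega), hθjl r (ℓ+1) hr le_rfl (by omega) (by omega), hI1]
    simp only [Nat.sub_self, Nat.add_sub_cancel, Nat.choose_zero_right, Nat.cast_one, mul_one]
    have key : ∑ i ∈ Finset.Icc ℓ L, b i * (beta/(lam+beta)) ^ (i - ℓ)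
        = b ℓ + (beta/(lam+beta)) *
            ∑ i ∈ Finset.Icc (ℓ+1) L, b i * (beta/(lam+beta)) ^ (i - (ℓ+1)) := by
      rw [sum_Icc_bot (fun i => b i * (beta/(lam+beta)) ^ (i - ℓ)) ℓ L (by omega)]
      simp only [Nat.sub_self, pow_zero, mul_one]
      rw [Finset.mul_sum]
      congr 1
      refine Finset.sum_congr rfl fun i hi => ?_
      have hi' := Finset.mem_Icc.mp hi
      rw [show i - ℓ = (i - (ℓ+1)) + 1 by omega, pow_succ]
      ring
    rw [key, show r + 1 - r = 1 by omega, pow_one]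
    field_simp
  -- Part 6
  have part6 : ∀ j ℓ, 1 ≤ j → j < r → 1 ≤ ℓ → ℓ < L →
      (lam + beta) * θjl j ℓ = lam * θjl (j + 1) ℓ + beta * θjl j (ℓ + 1) := by
    intro j ℓ hj1 hjr hℓ1 hℓL
    rw [hθjl j ℓ hj1 (by omega) hℓ1 (by omega),
        hθjl (j+1) ℓ (by omega) (by omega) hℓ1 (by omega),
        hθjl j (ℓ+1) hj1 (by omega) (by omega) (by omega)]
    have ha : (beta/(lam+beta)) * ∑ i ∈ Finset.Icc (ℓ+1) L,
          b i * (beta/(lam+beta)) ^ (i - (ℓ+1)) * (Nat.choose (i - (ℓ+1) + r - j) (r - j) : ℝ)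
        = ∑ i ∈ Finset.Icc (ℓ+1) L,
          b i * (beta/(lam+beta)) ^ (i - ℓ) * (Nat.choose (i - ℓ + r - (j+1)) (r - j) : ℝ) := by
      rw [Finset.mul_sum]
      refine Finset.sum_congr rfl fun i hi => ?_
      have hi' := Finset.mem_Icc.mp hi
      rw [show i - (ℓ+1) + r - j = i - ℓ + r - (j+1) by omega,
          show i - ℓ = (i - (ℓ+1)) + 1 by omega, pow_succ]
      ring
    have hb2 : ∑ i ∈ Finset.Icc ℓ L,
          b i * (beta/(lam+beta)) ^ (i - ℓ) * (Nat.choose (i - ℓ + r - (j+1)) (r - j) : ℝ)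
        = ∑ i ∈ Finset.Icc (ℓ+1) L,
          b i * (beta/(lam+beta)) ^ (i - ℓ) * (Nat.choose (i - ℓ + r - (j+1)) (r - j) : ℝ) := by
      rw [sum_Icc_bot (fun i => b i * (beta/(lam+beta)) ^ (i - ℓ) *
          (Nat.choose (i - ℓ + r - (j+1)) (r - j) : ℝ)) ℓ L (by omega)]
      simp only [Nat.sub_self, zero_add, pow_zero, mul_one, one_mul]
      rw [Nat.choose_eq_zero_of_lt (by omega)]
      simp
    have key : ∑ i ∈ Finset.Icc ℓ L,
          b i * (beta/(lam+beta)) ^ (i - ℓ) * (Nat.choose (i - ℓ + r - j) (r - j) : ℝ)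
        = (∑ i ∈ Finset.Icc ℓ L,
            b i * (beta/(lam+beta)) ^ (i - ℓ) * (Nat.choose (i - ℓ + r - (j+1)) (r - (j+1)) : ℝ))
          + ∑ i ∈ Finset.Icc ℓ L,
            b i * (beta/(lam+beta)) ^ (i - ℓ) * (Nat.choose (i - ℓ + r - (j+1)) (r - j) : ℝ) := by
      rw [← Finset.sum_add_distrib]
      refine Finset.sum_congr rfl fun i hi => ?_
      have hi' := Finset.mem_Icc.mp hi
      rw [show i - ℓ + r - j = (i - ℓ + r - (j+1)) + 1 by omega,
          show r - j = (r - (j+1)) + 1 by omega, Nat.choose_succ_succ]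
      push_cast
      ring
    rw [key, hb2, ← ha, show r + 1 - j = (r + 1 - (j+1)) + 1 by omega, pow_succ]
    field_simp
  -- Part 7
  have part7 : ∀ ℓ, 1 ≤ ℓ → ℓ < L →
      beta * θ0 ℓ = lam * θjl 1 ℓ + beta * θ0 (ℓ + 1) := by
    intro ℓ hℓ1 hℓL
    rw [hθ0 ℓ hℓ1 (by omega), hθjl 1 ℓ le_rfl hr hℓ1 (by omega), hθ0 (ℓ+1) (by omega) (by omega)]
    have hshift : (∑ i ∈ Finset.Icc (ℓ+1) L, (∑ g ∈ Finset.Icc i L, b g) *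
          (beta/(lam+beta)) ^ (i - (ℓ+1)) * (Nat.choose (i - (ℓ+1) + r - 1) (r - 1) : ℝ))
        = ∑ i ∈ Finset.Icc ℓ (L-1), (∑ g ∈ Finset.Icc (i+1) L, b g) *
          (beta/(lam+beta)) ^ (i - ℓ) * (Nat.choose (i - ℓ + r - 1) (r - 1) : ℝ) := by
      have hsh := sum_Icc_shift (fun i => (∑ g ∈ Finset.Icc i L, b g) *
          (beta/(lam+beta)) ^ (i - (ℓ+1)) * (Nat.choose (i - (ℓ+1) + r - 1) (r - 1) : ℝ)) ℓ (L-1)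
      rw [show L - 1 + 1 = L by omega] at hsh
      rw [hsh]
      refine Finset.sum_congr rfl fun i hi => ?_
      have hi' := Finset.mem_Icc.mp hi
      rw [show i + 1 - (ℓ+1) = i - ℓ by omega]
    have hsplit : ∑ i ∈ Finset.Icc ℓ L, (∑ g ∈ Finset.Icc i L, b g) *
          (beta/(lam+beta)) ^ (i - ℓ) * (Nat.choose (i - ℓ + r - 1) (r - 1) : ℝ)
        = (∑ i ∈ Finset.Icc ℓ L, b i *
            (beta/(lam+beta)) ^ (i - ℓ) * (Nat.choose (i - ℓ + r - 1) (r - 1) : ℝ))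
          + ∑ i ∈ Finset.Icc ℓ (L-1), (∑ g ∈ Finset.Icc (i+1) L, b g) *
            (beta/(lam+beta)) ^ (i - ℓ) * (Nat.choose (i - ℓ + r - 1) (r - 1) : ℝ) := by
      rw [sum_Icc_top (fun i => (∑ g ∈ Finset.Icc i L, b g) *
            (beta/(lam+beta)) ^ (i - ℓ) * (Nat.choose (i - ℓ + r - 1) (r - 1) : ℝ)) ℓ L
            (by omega) hL,
          sum_Icc_top (fun i => b i *
            (beta/(lam+beta)) ^ (i - ℓ) * (Nat.choose (i - ℓ + r - 1) (r - 1) : ℝ)) ℓ L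
            (by omega) hL]
      simp only [Finset.Icc_self, Finset.sum_singleton]
      have hcg : ∀ i ∈ Finset.Icc ℓ (L-1), (∑ g ∈ Finset.Icc i L, b g) *
            (beta/(lam+beta)) ^ (i - ℓ) * (Nat.choose (i - ℓ + r - 1) (r - 1) : ℝ)
          = b i * (beta/(lam+beta)) ^ (i - ℓ) * (Nat.choose (i - ℓ + r - 1) (r - 1) : ℝ)
            + (∑ g ∈ Finset.Icc (i+1) L, b g) *
              (beta/(lam+beta)) ^ (i - ℓ) * (Nat.choose (i - ℓ + r - 1) (r - 1) : ℝ) := by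
        intro i hi
        have hi' := Finset.mem_Icc.mp hi
        rw [sum_Icc_bot b i L (by omega)]
        ring
      rw [Finset.sum_congr rfl hcg, Finset.sum_add_distrib]
      ring
    rw [hshift, hsplit, show r + 1 - 1 = r by omega]
    field_simp
  -- Part 1
  have hIS : θI S = c := hθI S (by omega) le_rfl
  have hT1 : beta * θ0 1 = lam * ∑ ℓ ∈ Finset.Icc 1 L, θjl 1 ℓ := by
    have h := telescope_aux (fun ℓ => beta * θ0 ℓ) (fun ℓ => lam * θjl 1 ℓ) L hL
      (fun ℓ ha hb => by have := part7 ℓ ha hb; linarith) (by simpa using part8)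
    rw [h, ← Finset.mul_sum]
  have hTr : beta * θjl r 1 = lam * c - lam * ∑ ℓ ∈ Finset.Icc 1 L, θjl r ℓ := by
    have h := telescope_aux (fun ℓ => beta * θjl r ℓ)
      (fun ℓ => lam * c * b ℓ - lam * θjl r ℓ) L hL
      (fun ℓ ha hb => by
        have h3 := part3 ℓ ha hb; rw [hI1] at h3; linear_combination h3)
      (by have h4 := part4; rw [hI1] at h4; linear_combination h4)
    rw [h, Finset.sum_sub_distrib, ← Finset.mul_sum, ← Finset.mul_sum, hb_sum, mul_one]
  have hTj : ∀ j, 1 ≤ j → j < r → beta * θjl j 1 =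
      lam * (∑ ℓ ∈ Finset.Icc 1 L, θjl (j+1) ℓ) - lam * ∑ ℓ ∈ Finset.Icc 1 L, θjl j ℓ := by
    intro j hj1 hjr
    have h := telescope_aux (fun ℓ => beta * θjl j ℓ)
      (fun ℓ => lam * θjl (j+1) ℓ - lam * θjl j ℓ) L hL
      (fun ℓ ha hb => by
        have h6 := part6 j ℓ hj1 hjr ha hb; linear_combination h6)
      (by have h5 := part5 j hj1 hjr; linear_combination h5)
    rw [h, Finset.sum_sub_distrib, ← Finset.mul_sum, ← Finset.mul_sum]
  have houter := telescope_aux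
      (fun j => lam * c - lam * ∑ ℓ ∈ Finset.Icc 1 L, θjl j ℓ)
      (fun j => beta * θjl j 1) r hr
      (fun j hj1 hjr => by
        have h := hTj j hj1 hjr; linear_combination -h)
      (by linear_combination -hTr)
  have part1 : lam * θI S = beta * (θ0 1 + ∑ j ∈ Finset.Icc 1 r, θjl j 1) := by
    rw [hIS, mul_add, Finset.mul_sum, ← houter, hT1]
    ring
  exact ⟨part1, part2, part3, part4, part5, part6, part7, part8⟩
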